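/- Let T be a complete first-order theory and φ(x;y) a partitioned formula. Then φ(x;y) is consistency maximal in T if and only if φ(x;y) has the independence property in T. -/

import Mathlib

open FirstOrder Language Set

universe u v w

/-- A partitioned formula `φ(x;y)` (object variables `α`, parameter variables `β`)
exhibits the pattern `(C, I)` (indexed by `S`) in the theory `T`. -/
def ExhibitsPattern {L : FirstOrder.Language.{u, v}} (T : L.Theory) {α β S : Type*}
    (φ : L.Formula (α ⊕ β)) (C I : Set (Set S × Set S)) : Prop :=
  ∃ (M : Theory.ModelType.{u, v, w} T) (b : S → β → M),
    (∀ p ∈ C, ∃ a : α → M,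
      (∀ i ∈ p.1, φ.Realize (Sum.elim a (b i))) ∧
      (∀ j ∈ p.2, ¬ φ.Realize (Sum.elim a (b j)))) ∧
    (∀ p ∈ I, ¬ ∃ a : α → M,
      (∀ i ∈ p.1, φ.Realize (Sum.elim a (b i))) ∧
      (∀ j ∈ p.2, ¬ φ.Realize (Sum.elim a (b j))))

/-- `(C, I)` is a pattern: the condition `(∅, ∅)` is excluded. -/
def IsPattern {S : Type*} (C I : Set (Set S × Set S)) : Prop :=
  (∅, ∅) ∉ C ∧ (∅, ∅) ∉ I

/-- A pattern is exhibitable if some partitioned formula of some complete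
first-order theory exhibits it. -/
def Exhibitable {S : Type*} (C I : Set (Set S × Set S)) : Prop :=
  ∃ (L : FirstOrder.Language.{0, 0}) (T : L.Theory) (_ : T.IsComplete) (α β : Type)
    (φ : L.Formula (α ⊕ β)), ExhibitsPattern.{0, 0, 0} T φ C I

/-- `φ(x;y)` is consistency maximal (CM) in `T`: it exhibits every reasonable pattern with no
inconsistency conditions. -/
def IsCM {L : FirstOrder.Language.{u, v}} (T : L.Theory) {α β : Type*}
    (φ : L.Formula (α ⊕ β)) : Prop :=
  ∀ (n : ℕ) (C : Set (Set (Fin n) × Set (Fin n))),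
    ((∅ : Set (Fin n)), (∅ : Set (Fin n))) ∉ C →
    (∀ p ∈ C, p.1 ∩ p.2 = ∅) →
      ExhibitsPattern.{u, v, w} T φ C (∅ : Set (Set (Fin n) × Set (Fin n)))

/-- `φ(x;y)` has the independence property in `T`. -/
def HasIP {L : FirstOrder.Language.{u, v}} (T : L.Theory) {α β : Type*}
    (φ : L.Formula (α ⊕ β)) : Prop :=
  ∃ (M : Theory.ModelType.{u, v, w} T) (a : ℕ → α → M) (b : Set ℕ → β → M),
    ∀ (i : ℕ) (I : Set ℕ), φ.Realize (Sum.elim (a i) (b I)) ↔ i ∈ I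

/-- Auxiliary: from CM we get, for every `n`, a model with a finite IP configuration. -/
theorem exists_IP_config {L : FirstOrder.Language.{u, v}} (T : L.Theory)
    {α β : Type*} (φ : L.Formula (α ⊕ β)) (hCM : IsCM.{u, v, w} T φ) (n : ℕ) :
    ∃ (M : Theory.ModelType.{u, v, w} T) (a : Fin n → α → M) (b : Set (Fin n) → β → M),
      ∀ (i : Fin n) (J : Set (Fin n)), φ.Realize (Sum.elim (a i) (b J)) ↔ i ∈ J := by
  classical
  letI : Fintype (Set (Fin n)) := Fintype.ofFinite _
  set m := Fintype.card (Set (Fin n)) with hm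
  let e : Set (Fin n) ≃ Fin m := Fintype.equivFin _
  set C : Set (Set (Fin m) × Set (Fin m)) :=
    Set.range (fun i : Fin n => ({k | i ∈ e.symm k}, {k | i ∉ e.symm k})) with hCdef
  have h0 : ((∅ : Set (Fin m)), (∅ : Set (Fin m))) ∉ C := by
    rintro ⟨i, hi⟩
    have h1 : {k | i ∈ e.symm k} = (∅ : Set (Fin m)) := congrArg Prod.fst hi
    have h2 : e Set.univ ∈ {k | i ∈ e.symm k} := by
      simp [Set.mem_setOf_eq]
    rw [h1] at h2
    exact h2
  have hdisj : ∀ p ∈ C, p.1 ∩ p.2 = ∅ := by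
    rintro p ⟨i, rfl⟩
    ext k
    simp
  obtain ⟨M, b, hC, -⟩ := hCM m C h0 hdisj
  refine ⟨M, fun i => Classical.choose (hC _ (Set.mem_range_self i)),
    fun J => b (e J), ?_⟩
  intro i J
  have hs := Classical.choose_spec (hC _ (Set.mem_range_self i))
  by_cases hiJ : i ∈ J
  · simp only [hiJ, iff_true]
    exact hs.1 (e J) (by simp [Set.mem_setOf_eq, hiJ])
  · simp only [hiJ, iff_false]
    exact hs.2 (e J) (by simp [Set.mem_setOf_eq, hiJ])

/-- `φ(x;y)` is consistency maximal in the complete theory `T` iff it has the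
independence property in `T`. -/
theorem consistency_maximal_iff_IP
    {L : FirstOrder.Language.{u, v}} (T : L.Theory) (hT : T.IsComplete)
    {α β : Type*} (φ : L.Formula (α ⊕ β)) :
    IsCM.{u, v, w} T φ ↔ HasIP.{u, v, w} T φ := by
  classical
  constructor
  · -- CM → IP, via an ultraproduct of the finite IP configurations.
    intro hCM
    choose Mf af bf hf using exists_IP_config.{u, v, w} T φ hCM
    haveI hne : ∀ n : ℕ, Nonempty (Mf n) := fun n => (Mf n).nonempty'
    let u : Ultrafilter ℕ := Ultrafilter.of Filter.atTop
    have hu : ∀ i : ℕ, ∀ᶠ k in (u : Filter ℕ), i < k := fun i =>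
      (Filter.eventually_gt_atTop i).filter_mono (Ultrafilter.of_le Filter.atTop)
    -- the ultraproduct is a model of T
    haveI hmodel : T.Model ((u : Filter ℕ).Product fun n => Mf n) := by
      refine ⟨fun {ψ} hψ => ?_⟩
      rw [Ultraproduct.sentence_realize]
      exact Filter.Eventually.of_forall fun n => (Mf n).is_model.realize_of_mem ψ hψ
    -- representatives of the IP witnesses
    let xrep : ℕ → α → ∀ n : ℕ, Mf n := fun i v n =>
      if h : i < n then af n ⟨i, h⟩ v else Classical.arbitrary (Mf n)
    let brep : Set ℕ → β → ∀ n : ℕ, Mf n := fun I v n => bf n {j : Fin n | (j : ℕ) ∈ I} v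
    refine ⟨Theory.ModelType.of T ((u : Filter ℕ).Product fun n => Mf n),
      fun i v => (xrep i v : (u : Filter ℕ).Product fun n => Mf n),
      fun I v => (brep I v : (u : Filter ℕ).Product fun n => Mf n), ?_⟩
    intro i I
    have hcast : (Sum.elim
        (fun v : α => (xrep i v : (u : Filter ℕ).Product fun n => Mf n))
        (fun v : β => (brep I v : (u : Filter ℕ).Product fun n => Mf n))) =
        fun s : α ⊕ β =>
          ((Sum.elim (xrep i) (brep I) s : ∀ n : ℕ, Mf n) :
            (u : Filter ℕ).Product fun n => Mf n) := by
      funext s; cases s <;> rfl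
    have hmain : φ.Realize (Sum.elim
        (fun v : α => (xrep i v : (u : Filter ℕ).Product fun n => Mf n))
        (fun v : β => (brep I v : (u : Filter ℕ).Product fun n => Mf n))) ↔
        ∀ᶠ n in (u : Filter ℕ), φ.Realize
          (fun s : α ⊕ β => Sum.elim (xrep i) (brep I) s n) := by
      rw [hcast]
      exact Ultraproduct.realize_formula_cast φ _
    have hcoord : ∀ n : ℕ, (fun s : α ⊕ β => Sum.elim (xrep i) (brep I) s n) =
        Sum.elim (fun v => xrep i v n) (fun v => brep I v n) := by
      intro n; funext s; cases s <;> rfl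
    refine Iff.trans hmain ?_
    constructor
    · intro h
      obtain ⟨n, hn, hin⟩ := (h.and (hu i)).exists
      rw [hcoord n] at hn
      have hx : (fun v => xrep i v n) = af n ⟨i, hin⟩ := by
        funext v; simp only [xrep, dif_pos hin]
      rw [hx] at hn
      have := (hf n ⟨i, hin⟩ {j : Fin n | (j : ℕ) ∈ I}).1 hn
      exact this
    · intro hiI
      refine Filter.Eventually.mono (hu i) fun n hin => ?_
      rw [hcoord n]
      have hx : (fun v => xrep i v n) = af n ⟨i, hin⟩ := by
        funext v; simp only [xrep, dif_pos hin]
      rw [hx]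
      exact (hf n ⟨i, hin⟩ {j : Fin n | (j : ℕ) ∈ I}).2 hiI
  · -- IP → CM
    rintro ⟨M, a, b, hab⟩ n C hC0 hCdisj
    obtain ⟨f, hfinj⟩ := exists_injective_nat (Set (Fin n) × Set (Fin n))
    refine ⟨M, fun i => b {m | ∃ p ∈ C, f p = m ∧ i ∈ p.1}, ?_, by simp⟩
    intro p hp
    refine ⟨a (f p), fun i hi => ?_, fun j hj hre => ?_⟩
    · rw [hab]
      exact ⟨p, hp, rfl, hi⟩
    · rw [hab] at hre
      obtain ⟨q, hq, hfq, hjq⟩ := hre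
      cases hfinj hfq
      have hmem : j ∈ p.1 ∩ p.2 := ⟨hjq, hj⟩
      rw [hCdisj p hp] at hmem
      exact hmem
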